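/- Let C be an n × n complex matrix such that 1 − Cᴴ C is positive semidefinite. Then 1 − C Cᴴ is positive semidefinite, and C * (1 − Cᴴ C)^{1/2} = (1 − C Cᴴ)^{1/2} * C, where B^{1/2} denotes the (unique) positive semidefinite square root of a positive semidefinite matrix B. -/

import Mathlib

open Matrix Polynomial
open scoped ComplexOrder

/-- The positive semidefinite square root of a positive semidefinite matrix
(the definition removed from Mathlib, restored verbatim). -/
noncomputable def Matrix.PosSemidef.sqrt {n : Type*} [Fintype n] [DecidableEq n]
    {𝕜 : Type*} [RCLike 𝕜] {A : Matrix n n 𝕜} (hA : A.PosSemidef) : Matrix n n 𝕜 :=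
  hA.1.eigenvectorUnitary.1 * diagonal ((↑) ∘ (√·) ∘ hA.1.eigenvalues) *
    (star hA.1.eigenvectorUnitary : Matrix n n 𝕜)

/-- Conjugation by a unitary matrix as an algebra homomorphism. -/
noncomputable def conjAlgHomAux {n : ℕ} (U : Matrix (Fin n) (Fin n) ℂ)
    (h1 : star U * U = 1) (h2 : U * star U = 1) :
    Matrix (Fin n) (Fin n) ℂ →ₐ[ℂ] Matrix (Fin n) (Fin n) ℂ where
  toFun X := U * X * star U
  map_one' := by show U * 1 * star U = 1; rw [mul_one, h2]
  map_mul' X Y := by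
    show U * (X * Y) * star U = (U * X * star U) * (U * Y * star U)
    simp only [mul_assoc]
    rw [← mul_assoc (star U) U, h1, one_mul]
  map_zero' := by show U * 0 * star U = 0; simp
  map_add' X Y := by
    show U * (X + Y) * star U = U * X * star U + U * Y * star U
    rw [mul_add, add_mul]
  commutes' c := by
    show U * (algebraMap ℂ (Matrix (Fin n) (Fin n) ℂ) c) * star U = _
    rw [Algebra.algebraMap_eq_smul_one, mul_smul_comm, mul_one, smul_mul_assoc, h2]

lemma aeval_eq_sqrt_aux {n : ℕ} {M : Matrix (Fin n) (Fin n) ℂ} (hM : M.PosSemidef)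
    (p : Polynomial ℝ)
    (hp : ∀ i, p.eval (hM.1.eigenvalues i) = Real.sqrt (hM.1.eigenvalues i)) :
    Polynomial.aeval M (p.map (algebraMap ℝ ℂ)) = hM.sqrt := by
  set U : Matrix (Fin n) (Fin n) ℂ := (hM.1.eigenvectorUnitary : Matrix (Fin n) (Fin n) ℂ)
  have h1 : star U * U = 1 := (Matrix.mem_unitaryGroup_iff').mp hM.1.eigenvectorUnitary.2
  have h2 : U * star U = 1 := (Matrix.mem_unitaryGroup_iff).mp hM.1.eigenvectorUnitary.2
  set f := conjAlgHomAux U h1 h2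
  set d : (Fin n) → ℂ := RCLike.ofReal ∘ hM.1.eigenvalues
  have hMf : M = f (diagonal d) := hM.1.spectral_theorem
  have key : ∀ q : Polynomial ℂ,
      Polynomial.aeval M q = f (diagonal (fun i => Polynomial.aeval (d i) q)) := by
    intro q
    rw [hMf, Polynomial.aeval_algHom_apply]
    congr 1
    have : diagonal d = Matrix.diagonalAlgHom ℂ d := rfl
    rw [this, Polynomial.aeval_algHom_apply]
    simp only [Matrix.diagonalAlgHom_apply]
    have : (Polynomial.aeval d q) = fun i => Polynomial.aeval (d i) q :=
      funext fun i =>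
        (Polynomial.aeval_algHom_apply (Pi.evalAlgHom ℂ (fun _ => ℂ) i) d q).symm
    rw [this]
  rw [key]
  have : (fun i => Polynomial.aeval (d i) (p.map (algebraMap ℝ ℂ)))
      = (RCLike.ofReal ∘ Real.sqrt ∘ hM.1.eigenvalues) := by
    funext i
    rw [Polynomial.aeval_map_algebraMap]
    show Polynomial.aeval ((algebraMap ℝ ℂ) (hM.1.eigenvalues i)) p = _
    rw [Polynomial.aeval_algebraMap_apply_eq_algebraMap_eval, hp i]
    rfl
  rw [this]
  rfl

lemma intertwine_aux {n : ℕ} (C A B : Matrix (Fin n) (Fin n) ℂ) (hCA : C * A = B * C)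
    (q : Polynomial ℂ) : C * Polynomial.aeval A q = Polynomial.aeval B q * C := by
  have hpow : ∀ k : ℕ, C * A ^ k = B ^ k * C := by
    intro k
    induction k with
    | zero => simp
    | succ k ih =>
      rw [pow_succ, ← mul_assoc, ih, mul_assoc, hCA, ← mul_assoc, ← pow_succ]
  induction q using Polynomial.induction_on' with
  | add f g hf hg => simp [map_add, mul_add, add_mul, hf, hg]
  | monomial k a =>
    rw [Polynomial.aeval_monomial, Polynomial.aeval_monomial, ← mul_assoc,
      ← Algebra.commutes a C, mul_assoc, hpow, ← mul_assoc]

/-- If `1 - Cᴴ C` is positive semidefinite then so is `1 - C Cᴴ`, and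
`C * (1 - Cᴴ C)^{1/2} = (1 - C Cᴴ)^{1/2} * C`, where `·^{1/2}` denotes the
positive semidefinite square root. -/
theorem mul_posSemidef_sqrt_comm (n : ℕ) (C : Matrix (Fin n) (Fin n) ℂ)
    (h : (1 - Cᴴ * C).PosSemidef) :
    (1 - C * Cᴴ).PosSemidef ∧
      ∀ (h₁ : (1 - Cᴴ * C).PosSemidef) (h₂ : (1 - C * Cᴴ).PosSemidef),
        C * h₁.sqrt = h₂.sqrt * C := by
  have key : (1 - C * Cᴴ) = (1 - C * Cᴴ)ᴴ * (1 - C * Cᴴ) + C * (1 - Cᴴ * C) * Cᴴ := by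
    simp only [conjTranspose_sub, conjTranspose_one, conjTranspose_mul,
      conjTranspose_conjTranspose]
    noncomm_ring
  have hB : (1 - C * Cᴴ).PosSemidef := by
    rw [key]
    exact (Matrix.posSemidef_conjTranspose_mul_self _).add (h.mul_mul_conjTranspose_same C)
  refine ⟨hB, fun h₁ h₂ => ?_⟩
  set s : Finset ℝ :=
    Finset.univ.image h₁.1.eigenvalues ∪ Finset.univ.image h₂.1.eigenvalues with hs
  set p := Lagrange.interpolate s id Real.sqrt with hpdef
  have hps : ∀ x ∈ s, p.eval x = Real.sqrt x := by
    intro x hx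
    have := Lagrange.eval_interpolate_at_node Real.sqrt (Set.injOn_id _) hx
    simpa [hpdef] using this
  have hCA : C * (1 - Cᴴ * C) = (1 - C * Cᴴ) * C := by noncomm_ring
  have e1 : Polynomial.aeval (1 - Cᴴ * C) (p.map (algebraMap ℝ ℂ)) = h₁.sqrt := by
    refine aeval_eq_sqrt_aux h₁ p fun i => hps _ ?_
    exact Finset.mem_union_left _ (Finset.mem_image_of_mem _ (Finset.mem_univ i))
  have e2 : Polynomial.aeval (1 - C * Cᴴ) (p.map (algebraMap ℝ ℂ)) = h₂.sqrt := by
    refine aeval_eq_sqrt_aux h₂ p fun i => hps _ ?_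
    exact Finset.mem_union_right _ (Finset.mem_image_of_mem _ (Finset.mem_univ i))
  rw [← e1, ← e2]
  exact intertwine_aux _ _ _ hCA _
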